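/- arXiv:2201.10209 — 3 statements merged into one kernel-verified Lean document; each statement's English description precedes it below -/
import Mathlib

section
/- Let a, b, c ∈ ℝ with c > 0 and β > 0, and Q(x,y) = (1/2)(ax² + by² + 2cxy). Suppose (x⃗; y⃗) with x₁ ≥ ⋯ ≥ x_r ≥ 0, y₁,…,y_r ≥ 0, ∑x_i = ρ, ∑y_i = 1−ρ maximizes F(x⃗;y⃗) = ∑_i (−x_i log x_i − y_i log y_i + βQ(x_i,y_i)) over all such configurations. Then y₁ ≥ y₂ ≥ ⋯ ≥ y_r. -/
set_option maxHeartbeats 1000000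


/-- The free-energy functional F of the two-block interchange model. -/
noncomputable def Fab (r : ℕ) (a b c β : ℝ) (x y : Fin r → ℝ) : ℝ :=
  ∑ i, (-(x i * Real.log (x i)) - y i * Real.log (y i) +
    β * ((a * x i ^ 2 + b * y i ^ 2 + 2 * c * x i * y i) / 2))

lemma sum_two' {r : ℕ} {i j : Fin r} (hij : i ≠ j) (h : Fin r → ℝ)
    (hz : ∀ k, k ≠ i → k ≠ j → h k = 0) : ∑ k, h k = h i + h j := by
  rw [← Finset.sum_pair hij]
  symm
  apply Finset.sum_subset (Finset.subset_univ _)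
  intro k _ hk
  simp only [Finset.mem_insert, Finset.mem_singleton, not_or] at hk
  exact hz k hk.1 hk.2

noncomputable def pert {r : ℕ} (i j : Fin r) (A B : ℝ) (x : Fin r → ℝ) : Fin r → ℝ :=
  fun k => if k = i then A else if k = j then B else x k

lemma pert_i {r : ℕ} {i j : Fin r} (A B : ℝ) (x : Fin r → ℝ) : pert i j A B x i = A := by
  simp [pert]

lemma pert_j {r : ℕ} {i j : Fin r} (hij : i ≠ j) (A B : ℝ) (x : Fin r → ℝ) :
    pert i j A B x j = B := by simp [pert, hij.symm]

lemma pert_other {r : ℕ} {i j k : Fin r} (hki : k ≠ i) (hkj : k ≠ j) (A B : ℝ)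
    (x : Fin r → ℝ) : pert i j A B x k = x k := by simp [pert, hki, hkj]

lemma pert_self {r : ℕ} (i j : Fin r) (x : Fin r → ℝ) : pert i j (x i) (x j) x = x := by
  funext k; unfold pert
  split_ifs with h1 h2
  · rw [h1]
  · rw [h2]
  · rfl

lemma pert_sum {r : ℕ} {i j : Fin r} (hij : i ≠ j) (A B : ℝ) (x : Fin r → ℝ) :
    ∑ k, pert i j A B x k = ∑ k, x k + (A - x i) + (B - x j) := by
  have h := sum_two' hij (fun k => pert i j A B x k - x k) (by
    intro k hki hkj; simp [pert_other hki hkj])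
  simp only [Finset.sum_sub_distrib, pert_i, pert_j hij] at h
  linarith

noncomputable def Gf (a b c β u v : ℝ) : ℝ :=
  -(u * Real.log u) - v * Real.log v + β * ((a * u ^ 2 + b * v ^ 2 + 2 * c * u * v) / 2)

lemma Fab_eq (r : ℕ) (a b c β : ℝ) (x y : Fin r → ℝ) :
    Fab r a b c β x y = ∑ i, Gf a b c β (x i) (y i) := rfl

lemma Fab_pert_diff {r : ℕ} (a b c β : ℝ) {i j : Fin r} (hij : i ≠ j)
    (x y : Fin r → ℝ) (A B A' B' : ℝ) :
    Fab r a b c β (pert i j A B x) (pert i j A' B' y) - Fab r a b c β x y =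
      (Gf a b c β A A' - Gf a b c β (x i) (y i)) +
      (Gf a b c β B B' - Gf a b c β (x j) (y j)) := by
  rw [Fab_eq, Fab_eq, ← Finset.sum_sub_distrib]
  have h := sum_two' hij
    (fun k => Gf a b c β (pert i j A B x k) (pert i j A' B' y k) - Gf a b c β (x k) (y k))
    (by intro k hki hkj; simp [pert_other hki hkj])
  simp only [pert_i, pert_j hij] at h
  exact h

/-- At a maximizer, every `x k` is strictly positive. -/
lemma x_pos_of_max (r : ℕ) (ρ a b c β : ℝ)
    (hρ0 : 0 < ρ) (hρ1 : ρ < 1) (hc : 0 < c) (hβ : 0 < β)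
    (x y : Fin r → ℝ) (hx0 : ∀ i, 0 ≤ x i) (hy0 : ∀ i, 0 ≤ y i)
    (hxs : ∑ i, x i = ρ) (hys : ∑ i, y i = 1 - ρ)
    (hmax : ∀ x' y' : Fin r → ℝ, (∀ i, 0 ≤ x' i) → (∀ i, 0 ≤ y' i) →
      ∑ i, x' i = ρ → ∑ i, y' i = 1 - ρ → Fab r a b c β x' y' ≤ Fab r a b c β x y) :
    ∀ k, 0 < x k := by
  intro k
  by_contra hk
  have hxk : x k = 0 := le_antisymm (not_lt.mp hk) (hx0 k)
  obtain ⟨m, hm⟩ : ∃ m, 0 < x m := by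
    by_contra h
    push_neg at h
    have : ∑ i, x i ≤ 0 := Finset.sum_nonpos (fun i _ => h i)
    linarith
  have hkm : k ≠ m := by rintro rfl; linarith
  -- bounds on y
  have hym1 : y m ≤ 1 := by
    have := Finset.single_le_sum (f := y) (fun i _ => hy0 i) (Finset.mem_univ m)
    linarith
  set C : ℝ := Real.log (x m / 2) - β * |a| * x m - β * c with hC
  set ε : ℝ := min (x m / 2) (min 1 (Real.exp (C - β * |a| - 1))) with hε
  have hε0 : 0 < ε := by
    apply lt_min (by linarith)
    exact lt_min one_pos (Real.exp_pos _)
  have hεm : ε ≤ x m / 2 := min_le_left _ _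
  have hε1 : ε ≤ 1 := le_trans (min_le_right _ _) (min_le_left _ _)
  have hεe : ε ≤ Real.exp (C - β * |a| - 1) := le_trans (min_le_right _ _) (min_le_right _ _)
  set x' : Fin r → ℝ := pert k m ε (x m - ε) x with hx'
  have hx'0 : ∀ l, 0 ≤ x' l := by
    intro l
    rcases eq_or_ne l k with h | h
    · rw [hx', h, pert_i]; linarith
    rcases eq_or_ne l m with h2 | h2
    · rw [hx', h2, pert_j hkm]; linarith
    · rw [hx', pert_other h h2]; exact hx0 l
  have hx's : ∑ l, x' l = ρ := by
    rw [hx', pert_sum hkm, hxs, hxk]; ring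
  have hle := hmax x' y hx'0 hy0 hx's hys
  have hdiff : Fab r a b c β x' y - Fab r a b c β x y =
      (Gf a b c β ε (y k) - Gf a b c β (x k) (y k)) +
      (Gf a b c β (x m - ε) (y m) - Gf a b c β (x m) (y m)) := by
    have := Fab_pert_diff a b c β hkm x y ε (x m - ε) (y k) (y m)
    rwa [pert_self] at this
  clear_value x' ε C
  -- now bound the difference below by ε
  have hlogε : Real.log ε ≤ C - β * |a| - 1 := by
    calc Real.log ε ≤ Real.log (Real.exp (C - β * |a| - 1)) :=
          Real.log_le_log hε0 hεe
    _ = C - β * |a| - 1 := Real.log_exp _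
  have hxm2 : (0:ℝ) < x m / 2 := by linarith
  have hxmε : x m / 2 ≤ x m - ε := by linarith
  have hlog1 : Real.log (x m / 2) ≤ Real.log (x m - ε) :=
    Real.log_le_log hxm2 hxmε
  have hlog2 : Real.log (x m - ε) ≤ Real.log (x m) :=
    Real.log_le_log (by linarith) (by linarith)
  have hGk : Gf a b c β ε (y k) - Gf a b c β (x k) (y k) =
      -(ε * Real.log ε) + β * a * ε ^ 2 / 2 + β * c * ε * y k := by
    rw [hxk]; unfold Gf; simp [Real.log_zero]; ring
  have hGm : Gf a b c β (x m - ε) (y m) - Gf a b c β (x m) (y m) =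
      (x m * Real.log (x m) - (x m - ε) * Real.log (x m - ε)) +
      β * a * (ε ^ 2 - 2 * x m * ε) / 2 - β * c * ε * y m := by
    unfold Gf; ring
  have hent : ε * Real.log (x m - ε) ≤
      x m * Real.log (x m) - (x m - ε) * Real.log (x m - ε) := by
    nlinarith [hlog2, hε0.le, hεm]
  have habs : (0:ℝ) ≤ |a| := abs_nonneg a
  have ha1 : -(β * |a|) * ε ^ 2 / 2 ≤ β * a * ε ^ 2 / 2 := by
    nlinarith [mul_nonneg (mul_nonneg hβ.le (show (0:ℝ) ≤ a + |a| by linarith [neg_abs_le a]))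
      (sq_nonneg ε)]
  have ha2 : -(β * |a|) * (ε ^ 2 + 2 * x m * ε) / 2 ≤ β * a * (ε ^ 2 - 2 * x m * ε) / 2 := by
    have p1 : (0:ℝ) ≤ β * ((a + |a|) * ε ^ 2) :=
      mul_nonneg hβ.le (mul_nonneg (by linarith [neg_abs_le a]) (sq_nonneg ε))
    have p2 : (0:ℝ) ≤ β * ((|a| - a) * (x m * ε)) :=
      mul_nonneg hβ.le (mul_nonneg (by linarith [le_abs_self a])
        (mul_nonneg hm.le hε0.le))
    nlinarith [p1, p2]
  have hcy : (0:ℝ) ≤ β * c * ε * y k :=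
    mul_nonneg (mul_nonneg (mul_nonneg hβ.le hc.le) hε0.le) (hy0 k)
  have key : ε ≤ Fab r a b c β x' y - Fab r a b c β x y := by
    rw [hdiff, hGk, hGm]
    have m1 := mul_le_mul_of_nonneg_left hlogε hε0.le
    rw [hC] at m1
    have m2 := mul_le_mul_of_nonneg_left hlog1 hε0.le
    have m3 : β * c * ε * y m ≤ β * c * ε := by
      have := mul_le_mul_of_nonneg_left hym1 (mul_nonneg (mul_nonneg hβ.le hc.le) hε0.le)
      linarith
    have p1 : (0:ℝ) ≤ β * |a| * ε * (1 - ε) :=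
      mul_nonneg (mul_nonneg (mul_nonneg hβ.le habs) hε0.le) (by linarith)
    nlinarith [hent, ha1, ha2, hcy, p1, m1, m2, m3]
  linarith

theorem maximizer_y_decreasing (r : ℕ) (hr : 1 ≤ r) (ρ a b c β : ℝ)
    (hρ0 : 0 < ρ) (hρ1 : ρ < 1) (hc : 0 < c) (hβ : 0 < β)
    (x y : Fin r → ℝ) (hx0 : ∀ i, 0 ≤ x i) (hy0 : ∀ i, 0 ≤ y i)
    (hxs : ∑ i, x i = ρ) (hys : ∑ i, y i = 1 - ρ)
    (hxdec : Antitone x)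
    (hmax : ∀ x' y' : Fin r → ℝ, (∀ i, 0 ≤ x' i) → (∀ i, 0 ≤ y' i) →
      ∑ i, x' i = ρ → ∑ i, y' i = 1 - ρ → Fab r a b c β x' y' ≤ Fab r a b c β x y) :
    Antitone y := by
  intro i j hij
  by_contra hcon
  push_neg at hcon   -- y i < y j
  have hijne : i ≠ j := by
    rintro rfl; exact lt_irrefl _ hcon
  have hxji : x j ≤ x i := hxdec hij
  set δ : ℝ := y j - y i with hδ
  have hδ0 : 0 < δ := by simp [hδ]; linarith
  rcases lt_or_eq_of_le hxji with hlt | heq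
  · -- swap y i and y j
    set y' : Fin r → ℝ := pert i j (y j) (y i) y with hy'
    have hy'0 : ∀ l, 0 ≤ y' l := by
      intro l
      rcases eq_or_ne l i with h | h
      · rw [hy', h, pert_i]; exact hy0 j
      rcases eq_or_ne l j with h2 | h2
      · rw [hy', h2, pert_j hijne]; exact hy0 i
      · rw [hy', pert_other h h2]; exact hy0 l
    have hy's : ∑ l, y' l = 1 - ρ := by
      rw [hy', pert_sum hijne, hys]; ring
    have hle := hmax x y' hx0 hy'0 hxs hy's
    have hdiff : Fab r a b c β x y' - Fab r a b c β x y =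
        β * c * (x i - x j) * (y j - y i) := by
      have := Fab_pert_diff a b c β hijne x y (x i) (x j) (y j) (y i)
      rw [pert_self] at this
      rw [← hy'] at this
      rw [this]
      unfold Gf; ring
    have hpos : 0 < β * c * (x i - x j) * (y j - y i) :=
      mul_pos (mul_pos (mul_pos hβ hc) (by linarith)) (by linarith)
    linarith
  · -- x j = x i =: t, t > 0; move x mass from i to j
    have hpos := x_pos_of_max r ρ a b c β hρ0 hρ1 hc hβ x y hx0 hy0 hxs hys hmax
    set t : ℝ := x i with ht
    have ht0 : 0 < t := hpos i
    have hxj : x j = t := heq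
    have hden : 0 < 2 / t + β * |a| := by positivity
    set ε : ℝ := min (t / 2) (β * c * δ / (2 * (2 / t + β * |a|))) with hε
    have hε0 : 0 < ε := lt_min (by linarith) (by positivity)
    have hεt : ε ≤ t / 2 := min_le_left _ _
    have hεd : ε * (2 / t + β * |a|) ≤ β * c * δ / 2 := by
      have h : ε ≤ β * c * δ / (2 * (2 / t + β * |a|)) := min_le_right _ _
      rw [le_div_iff₀ (by positivity)] at h
      nlinarith [h]
    set x' : Fin r → ℝ := pert i j (t - ε) (t + ε) x with hx'
    have hx'0 : ∀ l, 0 ≤ x' l := by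
      intro l
      rcases eq_or_ne l i with h | h
      · rw [hx', h, pert_i]; linarith
      rcases eq_or_ne l j with h2 | h2
      · rw [hx', h2, pert_j hijne]; linarith
      · rw [hx', pert_other h h2]; exact hx0 l
    have hx's : ∑ l, x' l = ρ := by
      rw [hx', pert_sum hijne, hxs, hxj, ← ht]; ring
    have hle := hmax x' y hx'0 hy0 hx's hys
    have hdiff : Fab r a b c β x' y - Fab r a b c β x y =
        ((t - ε) * (Real.log t - Real.log (t - ε)) +
         (t + ε) * (Real.log t - Real.log (t + ε))) +
        β * a * ε ^ 2 + β * c * ε * δ := by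
      have h := Fab_pert_diff a b c β hijne x y (t - ε) (t + ε) (y i) (y j)
      rw [pert_self] at h
      rw [← hx'] at h
      rw [h, ← ht, hxj]
      unfold Gf; ring
    have htε : 0 < t - ε := by linarith
    have htε2 : 0 < t + ε := by linarith
    -- log bounds
    have hb1 : Real.log (t + ε) - Real.log t ≤ ε / t := by
      have h := Real.log_le_sub_one_of_pos (show 0 < (t + ε) / t by positivity)
      rw [Real.log_div htε2.ne' ht0.ne'] at h
      have : (t + ε) / t - 1 = ε / t := by field_simp; ring
      linarith
    have hb2 : ε / t ≤ Real.log t - Real.log (t - ε) := by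
      have h := Real.one_sub_inv_le_log_of_pos (show 0 < t / (t - ε) by positivity)
      rw [Real.log_div ht0.ne' htε.ne'] at h
      have h2 : (t / (t - ε))⁻¹ = (t - ε) / t := by
        rw [inv_div]
      rw [h2] at h
      have : 1 - (t - ε) / t = ε / t := by field_simp; ring
      linarith
    have hentlb : -(2 * ε ^ 2 / t) ≤
        (t - ε) * (Real.log t - Real.log (t - ε)) +
        (t + ε) * (Real.log t - Real.log (t + ε)) := by
      have e1 : (t - ε) * (ε / t) ≤ (t - ε) * (Real.log t - Real.log (t - ε)) := by
        nlinarith [htε.le]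
      have e2 : (t + ε) * (Real.log t - Real.log (t + ε)) ≥ (t + ε) * (-(ε / t)) := by
        nlinarith [htε2.le]
      have e3 : (t - ε) * (ε / t) + (t + ε) * (-(ε / t)) = -(2 * ε ^ 2 / t) := by
        field_simp; ring
      linarith
    have ha : -(β * |a|) * ε ^ 2 ≤ β * a * ε ^ 2 := by
      nlinarith [mul_nonneg (mul_nonneg hβ.le
        (show (0:ℝ) ≤ a + |a| by linarith [neg_abs_le a])) (sq_nonneg ε)]
    have key : 0 < Fab r a b c β x' y - Fab r a b c β x y := by
      rw [hdiff]
      have h1 : ε * (ε * (2 / t + β * |a|)) ≤ ε * (β * c * δ / 2) := by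
        nlinarith [hε0.le]
      have h2 : 2 * ε ^ 2 / t + β * |a| * ε ^ 2 = ε * (ε * (2 / t + β * |a|)) := by
        field_simp
      nlinarith [mul_pos (mul_pos (mul_pos hβ hc) hε0) hδ0, hε0.le]
    linarith
end

section
/- If Q(x,y) = (1/2)(ax² + by² + 2cxy) is negative semidefinite (equivalently a ≤ 0, b ≤ 0, ab ≥ c²), then for every β > 0 the function F(x⃗;y⃗) = ∑_{i=1}^r (−x_i log x_i − y_i log y_i + βQ(x_i,y_i)) attains its maximum over Ω uniquely at the point ω₀ = (ρ/r,…,ρ/r; (1−ρ)/r,…,(1−ρ)/r). -/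
/-- Tangent line bound for `-t log t` at `s`. -/
lemma ent_le (s t : ℝ) (hs : 0 < s) (ht : 0 ≤ t) :
    -(t * Real.log t) ≤ -(t * Real.log s) + (s - t) := by
  rcases eq_or_lt_of_le ht with h | h
  · simp [← h]; linarith
  · have hlog := Real.log_le_sub_one_of_pos (div_pos hs h)
    rw [Real.log_div hs.ne' h.ne'] at hlog
    have h2 := mul_le_mul_of_nonneg_left hlog h.le
    have h3 : t * (s / t - 1) = s - t := by field_simp
    nlinarith

lemma ent_lt (s t : ℝ) (hs : 0 < s) (ht : 0 ≤ t) (hne : t ≠ s) :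
    -(t * Real.log t) < -(t * Real.log s) + (s - t) := by
  rcases eq_or_lt_of_le ht with h | h
  · simp [← h]; linarith
  · have hd1 : s / t ≠ 1 := by
      intro hcon
      exact hne ((div_eq_one_iff_eq h.ne').mp hcon).symm
    have hlog := Real.log_lt_sub_one_of_pos (div_pos hs h) hd1
    rw [Real.log_div hs.ne' h.ne'] at hlog
    have h2 := mul_lt_mul_of_pos_left hlog h
    have h3 : t * (s / t - 1) = s - t := by field_simp
    nlinarith

section Term

variable (a b c β m n u v : ℝ)

lemma quad_decomp :
    (a * u ^ 2 + b * v ^ 2 + 2 * c * u * v) / 2 =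
      ((a * m ^ 2 + b * n ^ 2 + 2 * c * m * n) / 2 +
        ((a * m + c * n) * (u - m) + (b * n + c * m) * (v - n))) +
      (a * (u - m) ^ 2 + b * (v - n) ^ 2 + 2 * c * (u - m) * (v - n)) / 2 := by
  ring

lemma term_le (hβ : 0 < β) (hm : 0 < m) (hn : 0 < n) (hu : 0 ≤ u) (hv : 0 ≤ v)
    (hQ : ∀ p q : ℝ, (a * p ^ 2 + b * q ^ 2 + 2 * c * p * q) / 2 ≤ 0) :
    -(u * Real.log u) - v * Real.log v +
      β * ((a * u ^ 2 + b * v ^ 2 + 2 * c * u * v) / 2) ≤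
    (-(u * Real.log m) + (m - u)) + (-(v * Real.log n) + (n - v)) +
      β * ((a * m ^ 2 + b * n ^ 2 + 2 * c * m * n) / 2 +
        ((a * m + c * n) * (u - m) + (b * n + c * m) * (v - n))) := by
  have e1 := ent_le m u hm hu
  have e2 := ent_le n v hn hv
  have hD := hQ (u - m) (v - n)
  have hβD : β * ((a * (u - m) ^ 2 + b * (v - n) ^ 2 + 2 * c * (u - m) * (v - n)) / 2) ≤ 0 :=
    mul_nonpos_of_nonneg_of_nonpos hβ.le hD
  rw [quad_decomp a b c m n u v, mul_add]
  linarith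

lemma term_lt (hβ : 0 < β) (hm : 0 < m) (hn : 0 < n) (hu : 0 ≤ u) (hv : 0 ≤ v)
    (hQ : ∀ p q : ℝ, (a * p ^ 2 + b * q ^ 2 + 2 * c * p * q) / 2 ≤ 0)
    (hne : u ≠ m ∨ v ≠ n) :
    -(u * Real.log u) - v * Real.log v +
      β * ((a * u ^ 2 + b * v ^ 2 + 2 * c * u * v) / 2) <
    (-(u * Real.log m) + (m - u)) + (-(v * Real.log n) + (n - v)) +
      β * ((a * m ^ 2 + b * n ^ 2 + 2 * c * m * n) / 2 +
        ((a * m + c * n) * (u - m) + (b * n + c * m) * (v - n))) := by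
  have hD := hQ (u - m) (v - n)
  have hβD : β * ((a * (u - m) ^ 2 + b * (v - n) ^ 2 + 2 * c * (u - m) * (v - n)) / 2) ≤ 0 :=
    mul_nonpos_of_nonneg_of_nonpos hβ.le hD
  rw [quad_decomp a b c m n u v, mul_add]
  rcases hne with hne | hne
  · have e1 := ent_lt m u hm hu hne
    have e2 := ent_le n v hn hv
    linarith
  · have e1 := ent_le m u hm hu
    have e2 := ent_lt n v hn hv hne
    linarith

end Term

theorem negSemidef_unique_max (r : ℕ) (hr : 2 ≤ r) (ρ a b c β : ℝ)
    (hρ0 : 0 < ρ) (hρ1 : ρ < 1) (hβ : 0 < β)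
    (hQ : ∀ u v : ℝ, (a * u ^ 2 + b * v ^ 2 + 2 * c * u * v) / 2 ≤ 0)
    (x y : Fin r → ℝ) (hx0 : ∀ i, 0 ≤ x i) (hy0 : ∀ i, 0 ≤ y i)
    (hxs : ∑ i, x i = ρ) (hys : ∑ i, y i = 1 - ρ) :
    Fab r a b c β x y ≤ Fab r a b c β (fun _ => ρ / r) (fun _ => (1 - ρ) / r) ∧
      (Fab r a b c β x y = Fab r a b c β (fun _ => ρ / r) (fun _ => (1 - ρ) / r) →
        x = (fun _ => ρ / r) ∧ y = (fun _ => (1 - ρ) / r)) := by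
  classical
  have hr0 : (0 : ℝ) < (r : ℝ) := by
    have : 0 < r := by omega
    exact_mod_cast this
  set m : ℝ := ρ / r with hm_def
  set n : ℝ := (1 - ρ) / r with hn_def
  have hm : 0 < m := div_pos hρ0 hr0
  have hn : 0 < n := div_pos (by linarith) hr0
  have hrm : (r : ℝ) * m = ρ := by rw [hm_def]; field_simp [hr0.ne']
  have hrn : (r : ℝ) * n = 1 - ρ := by rw [hn_def]; field_simp [hr0.ne']
  obtain ⟨K, hK_def⟩ : ∃ K : ℝ, K = m + n + β * ((a * m ^ 2 + b * n ^ 2 + 2 * c * m * n) / 2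
      - (a * m + c * n) * m - (b * n + c * m) * n) := ⟨_, rfl⟩
  obtain ⟨px, hpx_def⟩ : ∃ px : ℝ, px = -Real.log m - 1 + β * (a * m + c * n) := ⟨_, rfl⟩
  obtain ⟨py, hpy_def⟩ : ∃ py : ℝ, py = -Real.log n - 1 + β * (b * n + c * m) := ⟨_, rfl⟩
  set g : Fin r → ℝ := fun i =>
      (-(x i * Real.log m) + (m - x i)) + (-(y i * Real.log n) + (n - y i)) +
        β * ((a * m ^ 2 + b * n ^ 2 + 2 * c * m * n) / 2 +
          ((a * m + c * n) * (x i - m) + (b * n + c * m) * (y i - n))) with hg_def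
  have hgi : ∀ i, g i = K + (px * x i + py * y i) := by
    intro i
    simp only [hg_def, hK_def, hpx_def, hpy_def]
    ring
  have hsumg : ∑ i, g i = (r : ℝ) * K + (px * ρ + py * (1 - ρ)) := by
    calc ∑ i, g i = ∑ i, (K + (px * x i + py * y i)) :=
          Finset.sum_congr rfl (fun i _ => hgi i)
      _ = (r : ℝ) * K + (px * ρ + py * (1 - ρ)) := by
          rw [Finset.sum_add_distrib, Finset.sum_const, Finset.card_univ,
            Fintype.card_fin, nsmul_eq_mul, Finset.sum_add_distrib,
            ← Finset.mul_sum, ← Finset.mul_sum, hxs, hys]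
  have hFabu : Fab r a b c β (fun _ => m) (fun _ => n) =
      (r : ℝ) * (-(m * Real.log m) - n * Real.log n +
        β * ((a * m ^ 2 + b * n ^ 2 + 2 * c * m * n) / 2)) := by
    simp [Fab, Finset.sum_const, Finset.card_univ, nsmul_eq_mul]
    ring
  have hG : ∑ i, g i = Fab r a b c β (fun _ => m) (fun _ => n) := by
    rw [hsumg, hFabu, ← hrn, ← hrm]
    rw [hK_def, hpx_def, hpy_def]
    ring
  have hle : ∀ i ∈ Finset.univ, (-(x i * Real.log (x i)) - y i * Real.log (y i) +
      β * ((a * x i ^ 2 + b * y i ^ 2 + 2 * c * x i * y i) / 2)) ≤ g i := by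
    intro i _
    exact term_le a b c β m n (x i) (y i) hβ hm hn (hx0 i) (hy0 i) hQ
  have hmain : Fab r a b c β x y ≤ Fab r a b c β (fun _ => m) (fun _ => n) := by
    rw [← hG]
    exact Finset.sum_le_sum hle
  refine ⟨hmain, ?_⟩
  intro heq
  have hall : ∀ i, x i = m ∧ y i = n := by
    by_contra hc
    push_neg at hc
    obtain ⟨j, hj⟩ := hc
    have hj : x j ≠ m ∨ y j ≠ n := by
      by_cases h : x j = m
      · exact Or.inr (hj h)
      · exact Or.inl h
    have hstrict : Fab r a b c β x y < ∑ i, g i := by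
      refine Finset.sum_lt_sum hle ⟨j, Finset.mem_univ j, ?_⟩
      exact term_lt a b c β m n (x j) (y j) hβ hm hn (hx0 j) (hy0 j) hQ hj
    rw [hG] at hstrict
    linarith [heq ▸ hstrict]
  exact ⟨funext fun i => (hall i).1, funext fun i => (hall i).2⟩
end

section
/- Let a, b, c, ρ, ρ', β > 0 be real with ρ, ρ', β > 0 and suppose the quadratic form Q(x,y) = (1/2)(ax² + by² + 2cxy) is not negative semidefinite. Define γ by γ = (ρa + ρ'b − √((ρa − ρ'b)² + 4ρρ'c²)) / (ρρ'(ab − c²)) if ab ≠ c², and γ = 2/(aρ + bρ') if ab = c². Then the form βQ(x,y) − x²/ρ − y²/ρ' is negative semidefinite if and only if β ≤ γ, and negative definite if and only if β < γ. -/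
set_option maxHeartbeats 4000000


lemma nsd_char (A B C : ℝ) :
    (∀ x y : ℝ, A * x ^ 2 + B * y ^ 2 + 2 * C * x * y ≤ 0) ↔
      A ≤ 0 ∧ B ≤ 0 ∧ C ^ 2 ≤ A * B := by
  constructor
  · intro h
    have hA : A ≤ 0 := by have := h 1 0; nlinarith
    have hB : B ≤ 0 := by have := h 0 1; nlinarith
    refine ⟨hA, hB, ?_⟩
    rcases lt_or_eq_of_le hA with hA' | hA'
    · have := h C (-A); nlinarith
    · rcases lt_or_eq_of_le hB with hB' | hB'
      · have := h (-B) C; nlinarith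
      · have hc1 := h 1 1
        have hc2 := h 1 (-1)
        nlinarith [sq_nonneg C]
  · rintro ⟨hA, hB, hC⟩ x y
    rcases lt_or_eq_of_le hA with hA' | hA'
    · nlinarith [sq_nonneg (A * x + C * y), mul_nonneg (sub_nonneg.2 hC) (sq_nonneg y)]
    · have hC0 : C = 0 := by
        have h1 : C ^ 2 = 0 := le_antisymm (by nlinarith) (sq_nonneg C)
        exact pow_eq_zero_iff (two_ne_zero) |>.mp h1
      subst hC0
      subst hA'
      nlinarith [mul_nonneg (neg_nonneg.mpr hB) (sq_nonneg y)]

lemma nd_char (A B C : ℝ) :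
    (∀ x y : ℝ, (x, y) ≠ (0, 0) → A * x ^ 2 + B * y ^ 2 + 2 * C * x * y < 0) ↔
      A < 0 ∧ B < 0 ∧ C ^ 2 < A * B := by
  constructor
  · intro h
    have hA : A < 0 := by have := h 1 0 (by simp); nlinarith
    have hB : B < 0 := by have := h 0 1 (by simp); nlinarith
    refine ⟨hA, hB, ?_⟩
    have hne : ((C, -A) : ℝ × ℝ) ≠ (0, 0) := by
      simp only [ne_eq, Prod.mk.injEq, not_and]
      intro _
      linarith
    have := h C (-A) hne
    nlinarith
  · rintro ⟨hA, hB, hC⟩ x y hxy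
    rcases eq_or_ne y 0 with hy | hy
    · have hx : x ≠ 0 := by
        rintro rfl
        exact hxy (by rw [hy])
      subst hy
      have : 0 < x ^ 2 := by positivity
      nlinarith
    · have hy2 : 0 < y ^ 2 := by positivity
      nlinarith [sq_nonneg (A * x + C * y), mul_pos (sub_pos.2 hC) hy2]

lemma aux_pos (s k r A E v : ℝ) (hA : 0 < A) (hr0 : 0 ≤ r) (hr2 : r ^ 2 = s ^ 2 - 4 * k)
    (hE : 0 ≤ E) (hid : s * A = k + A ^ 2 + E) (hk : 0 < k) (hkβ : k * v ≤ s - r) :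
    v * A ≤ 2 := by
  have hr2A : (r * A) ^ 2 = (s ^ 2 - 4 * k) * A ^ 2 := by rw [mul_pow, hr2]
  have hkey2 : s * A - 2 * k ≤ r * A := by
    rcases le_or_gt (s * A - 2 * k) 0 with h | h
    · nlinarith [mul_nonneg hr0 hA.le]
    · have hsq : (s * A - 2 * k) ^ 2 ≤ (r * A) ^ 2 := by
        nlinarith [hr2A, hid, mul_nonneg hk.le hE]
      nlinarith [hsq, h, mul_nonneg hr0 hA.le]
  nlinarith [mul_le_mul_of_nonneg_right hkβ hA.le, hkey2, hk]

lemma aux_pos_lt (s k r A E v : ℝ) (hA : 0 < A) (hr0 : 0 ≤ r) (hr2 : r ^ 2 = s ^ 2 - 4 * k)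
    (hE : 0 ≤ E) (hid : s * A = k + A ^ 2 + E) (hk : 0 < k) (hkβ : k * v < s - r) :
    v * A < 2 := by
  have hr2A : (r * A) ^ 2 = (s ^ 2 - 4 * k) * A ^ 2 := by rw [mul_pow, hr2]
  have hkey2 : s * A - 2 * k ≤ r * A := by
    rcases le_or_gt (s * A - 2 * k) 0 with h | h
    · nlinarith [mul_nonneg hr0 hA.le]
    · have hsq : (s * A - 2 * k) ^ 2 ≤ (r * A) ^ 2 := by
        nlinarith [hr2A, hid, mul_nonneg hk.le hE]
      nlinarith [hsq, h, mul_nonneg hr0 hA.le]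
  nlinarith [mul_lt_mul_of_pos_right hkβ hA, hkey2, hk]

lemma aux_neg (s k r A E v : ℝ) (hA : 0 < A) (hr0 : 0 ≤ r) (hr2 : r ^ 2 = s ^ 2 - 4 * k)
    (hE : 0 ≤ E) (hid : s * A = k + A ^ 2 + E) (hk : k < 0) (hkβ : s - r ≤ k * v) :
    v * A ≤ 2 := by
  have hr2A : (r * A) ^ 2 = (s ^ 2 - 4 * k) * A ^ 2 := by rw [mul_pow, hr2]
  have h2k : 0 < s * A - 2 * k := by nlinarith [hid, hE, pow_pos hA 2]
  have hsq : (r * A) ^ 2 ≤ (s * A - 2 * k) ^ 2 := by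
    nlinarith [hr2A, hid, mul_nonneg (neg_nonneg.mpr hk.le) hE]
  have hkey2 : r * A ≤ s * A - 2 * k := by
    nlinarith [hsq, h2k, mul_nonneg hr0 hA.le]
  nlinarith [mul_le_mul_of_nonneg_right hkβ hA.le, hkey2, hk]

lemma aux_neg_lt (s k r A E v : ℝ) (hA : 0 < A) (hr0 : 0 ≤ r) (hr2 : r ^ 2 = s ^ 2 - 4 * k)
    (hE : 0 ≤ E) (hid : s * A = k + A ^ 2 + E) (hk : k < 0) (hkβ : s - r < k * v) :
    v * A < 2 := by
  have hr2A : (r * A) ^ 2 = (s ^ 2 - 4 * k) * A ^ 2 := by rw [mul_pow, hr2]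
  have h2k : 0 < s * A - 2 * k := by nlinarith [hid, hE, pow_pos hA 2]
  have hsq : (r * A) ^ 2 ≤ (s * A - 2 * k) ^ 2 := by
    nlinarith [hr2A, hid, mul_nonneg (neg_nonneg.mpr hk.le) hE]
  have hkey2 : r * A ≤ s * A - 2 * k := by
    nlinarith [hsq, h2k, mul_nonneg hr0 hA.le]
  nlinarith [mul_lt_mul_of_pos_right hkβ hA, hkey2, hk]

lemma core_lemma (a b c ρ ρ' β γ : ℝ) (hρ : 0 < ρ) (hρ' : 0 < ρ') (hβ : 0 < β)
    (hyp : 0 < a ∨ 0 < b ∨ a * b < c ^ 2)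
    (hγ : γ = if a * b = c ^ 2 then 2 / (a * ρ + b * ρ')
      else (ρ * a + ρ' * b - Real.sqrt ((ρ * a - ρ' * b) ^ 2 + 4 * ρ * ρ' * c ^ 2)) /
        (ρ * ρ' * (a * b - c ^ 2))) :
    ((β * a * ρ ≤ 2 ∧ β * b * ρ' ≤ 2 ∧
        0 ≤ ρ * ρ' * (a * b - c ^ 2) * β ^ 2 - 2 * (ρ * a + ρ' * b) * β + 4) ↔ β ≤ γ) ∧
    ((β * a * ρ < 2 ∧ β * b * ρ' < 2 ∧
        0 < ρ * ρ' * (a * b - c ^ 2) * β ^ 2 - 2 * (ρ * a + ρ' * b) * β + 4) ↔ β < γ) := by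
  set s := ρ * a + ρ' * b with hs
  set k := ρ * ρ' * (a * b - c ^ 2) with hk
  have hE : (0:ℝ) ≤ ρ * ρ' * c ^ 2 := by positivity
  have idA : s * (a * ρ) = k + (a * ρ) ^ 2 + ρ * ρ' * c ^ 2 := by rw [hs, hk]; ring
  have idB : s * (b * ρ') = k + (b * ρ') ^ 2 + ρ * ρ' * c ^ 2 := by rw [hs, hk]; ring
  by_cases hc : a * b = c ^ 2
  · -- degenerate case k = 0
    have hk0 : k = 0 := by rw [hk, hc]; ring
    have ha : 0 ≤ a := by
      rcases hyp with h | h | h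
      · linarith
      · by_contra h'
        push_neg at h'
        nlinarith [sq_nonneg c, mul_pos (by linarith : 0 < -a) h]
      · linarith
    have hb : 0 ≤ b := by
      rcases hyp with h | h | h
      · by_contra h'
        push_neg at h'
        nlinarith [sq_nonneg c, mul_pos h (by linarith : 0 < -b)]
      · linarith
      · linarith
    have hs0 : 0 < s := by
      rw [hs]
      rcases hyp with h | h | h
      · nlinarith [mul_pos hρ h, mul_nonneg hρ'.le hb]
      · nlinarith [mul_pos hρ' h, mul_nonneg hρ.le ha]
      · linarith
    have hne : a * ρ + b * ρ' ≠ 0 := by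
      have h1 : a * ρ + b * ρ' = s := by rw [hs]; ring
      rw [h1]; exact ne_of_gt hs0
    have hsγ : s * γ = 2 := by
      rw [hγ, if_pos hc, hs]
      rw [mul_div_assoc', div_eq_iff hne]
      ring
    have hkβ2 : k * β ^ 2 = 0 := by rw [hk0]; ring
    constructor
    · constructor
      · rintro ⟨h1, h2, h3⟩
        have h4 : s * β ≤ s * γ := by linarith
        exact le_of_mul_le_mul_left h4 hs0
      · intro hβγ
        have hsβ : s * β ≤ 2 := by
          have := mul_le_mul_of_nonneg_left hβγ hs0.le
          linarith
        have hsplit : s * β = ρ * a * β + ρ' * b * β := by rw [hs]; ring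
        refine ⟨?_, ?_, ?_⟩
        · nlinarith [mul_nonneg (mul_nonneg hρ'.le hb) hβ.le]
        · nlinarith [mul_nonneg (mul_nonneg hρ.le ha) hβ.le]
        · linarith
    · constructor
      · rintro ⟨h1, h2, h3⟩
        have h4 : s * β < s * γ := by linarith
        exact lt_of_mul_lt_mul_left h4 hs0.le
      · intro hβγ
        have hsβ : s * β < 2 := by
          have := mul_lt_mul_of_pos_left hβγ hs0
          linarith
        have hsplit : s * β = ρ * a * β + ρ' * b * β := by rw [hs]; ring
        refine ⟨?_, ?_, ?_⟩
        · nlinarith [mul_nonneg (mul_nonneg hρ'.le hb) hβ.le]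
        · nlinarith [mul_nonneg (mul_nonneg hρ.le ha) hβ.le]
        · linarith
  · -- nondegenerate case
    have hk0 : k ≠ 0 := by
      rw [hk]
      exact mul_ne_zero (by positivity) (sub_ne_zero.mpr hc)
    set r := Real.sqrt ((ρ * a - ρ' * b) ^ 2 + 4 * ρ * ρ' * c ^ 2) with hrdef
    have hr0 : 0 ≤ r := Real.sqrt_nonneg _
    have hr2 : r ^ 2 = s ^ 2 - 4 * k := by
      rw [hrdef, Real.sq_sqrt (by positivity), hs, hk]
      ring
    have hγ' : γ = (s - r) / k := by rw [hγ, if_neg hc]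
    have hkγ : k * γ = s - r := by
      rw [hγ']
      field_simp
    clear hγ hγ'
    rcases hk0.lt_or_gt with hkneg | hkpos
    · -- k < 0
      have hsr : 0 < s + r := by nlinarith [hr0, hr2]
      constructor
      · constructor
        · rintro ⟨h1, h2, h3⟩
          have hkey : s - k * β ≤ r := by
            rcases le_or_gt (s - k * β) 0 with h | h
            · linarith
            · have hkh3 : k * (k * β ^ 2 - 2 * s * β + 4) ≤ 0 :=
                mul_nonpos_of_nonpos_of_nonneg hkneg.le h3
              have hsq : (s - k * β) ^ 2 ≤ r ^ 2 := by nlinarith [hr2, hkh3]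
              nlinarith [hsq, hr0, h]
          nlinarith [hkγ, hkey, hkneg]
        · intro hβγ
          have hkβ : s - r ≤ k * β := by nlinarith [hkγ, hkneg]
          have hub : k * β ≤ s + r := by nlinarith [hsr, mul_pos_of_neg_of_neg hkneg (neg_neg_iff_pos.mpr hβ)]
          refine ⟨?_, ?_, ?_⟩
          · rcases le_or_gt a 0 with ha | ha
            · have h1 : β * a ≤ 0 := mul_nonpos_of_nonneg_of_nonpos hβ.le ha
              have h2 := mul_nonpos_of_nonpos_of_nonneg h1 hρ.le
              linarith
            · have := aux_neg s k r (a * ρ) (ρ * ρ' * c ^ 2) β (mul_pos ha hρ) hr0 hr2 hE idA hkneg hkβ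
              linarith
          · rcases le_or_gt b 0 with hb | hb
            · have h1 : β * b ≤ 0 := mul_nonpos_of_nonneg_of_nonpos hβ.le hb
              have h2 := mul_nonpos_of_nonpos_of_nonneg h1 hρ'.le
              linarith
            · have := aux_neg s k r (b * ρ') (ρ * ρ' * c ^ 2) β (mul_pos hb hρ') hr0 hr2 hE idB hkneg hkβ
              linarith
          · nlinarith [hkβ, hub, hr2, hkneg]
      · constructor
        · rintro ⟨h1, h2, h3⟩
          have hkey : s - k * β < r := by
            rcases le_or_gt (s - k * β) 0 with h | h
            · rcases eq_or_lt_of_le h with h' | h'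
              · nlinarith [hr2, hkneg]
              · linarith
            · have hkh3 : k * (k * β ^ 2 - 2 * s * β + 4) < 0 :=
                mul_neg_of_neg_of_pos hkneg h3
              have hsq : (s - k * β) ^ 2 < r ^ 2 := by nlinarith [hr2, hkh3]
              nlinarith [hsq, hr0, h]
          nlinarith [hkγ, hkey, hkneg]
        · intro hβγ
          have hkβ : s - r < k * β := by nlinarith [hkγ, hkneg]
          have hub : k * β < s + r := by
            nlinarith [hsr, mul_pos_of_neg_of_neg hkneg (neg_neg_iff_pos.mpr hβ)]
          refine ⟨?_, ?_, ?_⟩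
          · rcases le_or_gt a 0 with ha | ha
            · have h1 : β * a ≤ 0 := mul_nonpos_of_nonneg_of_nonpos hβ.le ha
              have h2 := mul_nonpos_of_nonpos_of_nonneg h1 hρ.le
              linarith
            · have := aux_neg_lt s k r (a * ρ) (ρ * ρ' * c ^ 2) β (mul_pos ha hρ) hr0 hr2 hE idA hkneg hkβ
              linarith
          · rcases le_or_gt b 0 with hb | hb
            · have h1 : β * b ≤ 0 := mul_nonpos_of_nonneg_of_nonpos hβ.le hb
              have h2 := mul_nonpos_of_nonpos_of_nonneg h1 hρ'.le
              linarith
            · have := aux_neg_lt s k r (b * ρ') (ρ * ρ' * c ^ 2) β (mul_pos hb hρ') hr0 hr2 hE idB hkneg hkβ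
              linarith
          · nlinarith [hkβ, hub, hr2, hkneg]
    · -- k > 0
      have habc : 0 < a * b - c ^ 2 := by
        rcases lt_trichotomy (a * b - c ^ 2) 0 with h | h | h
        · nlinarith [mul_pos hρ hρ']
        · exact absurd (by linarith : a * b = c ^ 2) hc
        · exact h
      have ha : 0 < a := by
        rcases hyp with h | h | h
        · exact h
        · nlinarith [sq_nonneg c]
        · linarith
      have hb : 0 < b := by nlinarith [sq_nonneg c]
      have hs0 : 0 < s := by
        rw [hs]
        nlinarith [mul_pos hρ ha, mul_pos hρ' hb]
      have hA : 0 < a * ρ := mul_pos ha hρ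
      have hB : 0 < b * ρ' := mul_pos hb hρ'
      constructor
      · constructor
        · rintro ⟨h1, h2, h3⟩
          have e1 : k * β = a * ρ * (b * ρ') * β - ρ * ρ' * c ^ 2 * β := by rw [hk]; ring
          have e2 : s = a * ρ + b * ρ' := by rw [hs]; ring
          have hskβ : k * β ≤ s := by
            linarith [mul_nonneg (by linarith : (0:ℝ) ≤ 2 - β * a * ρ) hB.le,
              mul_nonneg (by linarith : (0:ℝ) ≤ 2 - β * b * ρ') hA.le,
              mul_nonneg (mul_nonneg (mul_nonneg hρ.le hρ'.le) (sq_nonneg c)) hβ.le]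
          have hkey : r ≤ s - k * β := by
            have hsq : r ^ 2 ≤ (s - k * β) ^ 2 := by
              nlinarith [mul_nonneg hkpos.le h3, hr2]
            nlinarith [hsq, hr0, hskβ]
          nlinarith [hkγ, hkey, hkpos]
        · intro hβγ
          have hkβ : k * β ≤ s - r := by nlinarith [hkγ, hkpos]
          refine ⟨?_, ?_, ?_⟩
          · have := aux_pos s k r (a * ρ) (ρ * ρ' * c ^ 2) β hA hr0 hr2 hE idA hkpos hkβ
            linarith
          · have := aux_pos s k r (b * ρ') (ρ * ρ' * c ^ 2) β hB hr0 hr2 hE idB hkpos hkβ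
            linarith
          · nlinarith [hkβ, hr0, hr2, hkpos]
      · constructor
        · rintro ⟨h1, h2, h3⟩
          have e1 : k * β = a * ρ * (b * ρ') * β - ρ * ρ' * c ^ 2 * β := by rw [hk]; ring
          have e2 : s = a * ρ + b * ρ' := by rw [hs]; ring
          have hskβ : k * β ≤ s := by
            linarith [mul_nonneg (by linarith : (0:ℝ) ≤ 2 - β * a * ρ) hB.le,
              mul_nonneg (by linarith : (0:ℝ) ≤ 2 - β * b * ρ') hA.le,
              mul_nonneg (mul_nonneg (mul_nonneg hρ.le hρ'.le) (sq_nonneg c)) hβ.le]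
          have hkey : r < s - k * β := by
            have hsq : r ^ 2 < (s - k * β) ^ 2 := by
              nlinarith [mul_pos hkpos h3, hr2]
            nlinarith [hsq, hr0, hskβ]
          nlinarith [hkγ, hkey, hkpos]
        · intro hβγ
          have hkβ : k * β < s - r := by nlinarith [hkγ, hkpos]
          refine ⟨?_, ?_, ?_⟩
          · have := aux_pos_lt s k r (a * ρ) (ρ * ρ' * c ^ 2) β hA hr0 hr2 hE idA hkpos hkβ
            linarith
          · have := aux_pos_lt s k r (b * ρ') (ρ * ρ' * c ^ 2) β hB hr0 hr2 hE idB hkpos hkβ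
            linarith
          · nlinarith [hkβ, hr0, hr2, hkpos]

theorem perturbation_lemma (a b c ρ ρ' β γ : ℝ)
    (hρ : 0 < ρ) (hρ' : 0 < ρ') (hβ : 0 < β)
    (hQ : ∃ x y : ℝ, 0 < (a * x ^ 2 + b * y ^ 2 + 2 * c * x * y) / 2)
    (hγ : γ = if a * b = c ^ 2 then 2 / (a * ρ + b * ρ')
      else (ρ * a + ρ' * b - Real.sqrt ((ρ * a - ρ' * b) ^ 2 + 4 * ρ * ρ' * c ^ 2)) /
        (ρ * ρ' * (a * b - c ^ 2))) :
    ((∀ x y : ℝ,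
        β * ((a * x ^ 2 + b * y ^ 2 + 2 * c * x * y) / 2) - x ^ 2 / ρ - y ^ 2 / ρ' ≤ 0) ↔
      β ≤ γ) ∧
    ((∀ x y : ℝ, (x, y) ≠ (0, 0) →
        β * ((a * x ^ 2 + b * y ^ 2 + 2 * c * x * y) / 2) - x ^ 2 / ρ - y ^ 2 / ρ' < 0) ↔
      β < γ) := by
  have hyp : 0 < a ∨ 0 < b ∨ a * b < c ^ 2 := by
    by_contra h
    push_neg at h
    obtain ⟨x, y, hxy⟩ := hQ
    have h2 := (nsd_char a b c).mpr ⟨h.1, h.2.1, h.2.2⟩ x y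
    linarith
  obtain ⟨hcore1, hcore2⟩ := core_lemma a b c ρ ρ' β γ hρ hρ' hβ hyp hγ
  have hEq : ∀ x y : ℝ,
      (β * a - 2 / ρ) * x ^ 2 + (β * b - 2 / ρ') * y ^ 2 + 2 * (β * c) * x * y =
      2 * (β * ((a * x ^ 2 + b * y ^ 2 + 2 * c * x * y) / 2) - x ^ 2 / ρ - y ^ 2 / ρ') := by
    intro x y
    field_simp
    ring
  have t1 : (β * a - 2 / ρ ≤ 0) ↔ β * a * ρ ≤ 2 := by
    rw [sub_nonpos, le_div_iff₀ hρ]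
  have t1' : (β * a - 2 / ρ < 0) ↔ β * a * ρ < 2 := by
    rw [sub_neg, lt_div_iff₀ hρ]
  have t2 : (β * b - 2 / ρ' ≤ 0) ↔ β * b * ρ' ≤ 2 := by
    rw [sub_nonpos, le_div_iff₀ hρ']
  have t2' : (β * b - 2 / ρ' < 0) ↔ β * b * ρ' < 2 := by
    rw [sub_neg, lt_div_iff₀ hρ']
  have hid : ((β * a - 2 / ρ) * (β * b - 2 / ρ') - (β * c) ^ 2) * (ρ * ρ') =
      ρ * ρ' * (a * b - c ^ 2) * β ^ 2 - 2 * (ρ * a + ρ' * b) * β + 4 := by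
    field_simp
    ring
  have hρρ' : 0 < ρ * ρ' := mul_pos hρ hρ'
  have t3 : ((β * c) ^ 2 ≤ (β * a - 2 / ρ) * (β * b - 2 / ρ')) ↔
      0 ≤ ρ * ρ' * (a * b - c ^ 2) * β ^ 2 - 2 * (ρ * a + ρ' * b) * β + 4 := by
    constructor
    · intro h
      nlinarith [hid, hρρ', h]
    · intro h
      nlinarith [hid, hρρ']
  have t3' : ((β * c) ^ 2 < (β * a - 2 / ρ) * (β * b - 2 / ρ')) ↔
      0 < ρ * ρ' * (a * b - c ^ 2) * β ^ 2 - 2 * (ρ * a + ρ' * b) * β + 4 := by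
    constructor
    · intro h
      nlinarith [hid, hρρ', h]
    · intro h
      nlinarith [hid, hρρ']
  constructor
  · rw [← hcore1, ← t1, ← t2, ← t3, ← nsd_char]
    constructor
    · intro h x y
      have h1 := h x y
      have h2 := hEq x y
      linarith
    · intro h x y
      have h1 := h x y
      have h2 := hEq x y
      linarith
  · rw [← hcore2, ← t1', ← t2', ← t3', ← nd_char]
    constructor
    · intro h x y hxy
      have h1 := h x y hxy
      have h2 := hEq x y
      linarith
    · intro h x y hxy
      have h1 := h x y hxy
      have h2 := hEq x y
      linarith
end
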